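/- Let τ, ζ, θ be real with τ ≠ 0, ζ ≠ 0, sin θ ≠ 0, and let α ≠ 0. Set t₁ = τe^{−iθ}, t₂ = τe^{iθ}, t₃ = τζ, and z = −1/(ατ³ζ). If τ² = (2cosθ + ζ)/ζ and τ²(1 + 2ζcosθ) = 1/α, then t₁, t₂, t₃ are exactly the three roots of the cubic αz·t³ + t² + z·t + 1 = 0. -/
import Mathlib


open Complex in
theorem stmt10 (α τ ζ θ : ℝ) (hα : α ≠ 0) (hτ : τ ≠ 0) (hζ : ζ ≠ 0)
    (hs : Real.sin θ ≠ 0)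
    (h1 : τ^2 * ζ = 2*Real.cos θ + ζ)
    (h2 : α * τ^2 * (1 + 2*ζ*Real.cos θ) = 1) :
    ∀ t : ℂ,
      (α : ℂ) * (-1/((α:ℂ)*(τ:ℂ)^3*(ζ:ℂ))) * t^3 + t^2
        + (-1/((α:ℂ)*(τ:ℂ)^3*(ζ:ℂ))) * t + 1
      = (α : ℂ) * (-1/((α:ℂ)*(τ:ℂ)^3*(ζ:ℂ)))
        * (t - (τ:ℂ) * Complex.exp (-Complex.I * θ))
        * (t - (τ:ℂ) * Complex.exp (Complex.I * θ))
        * (t - (τ:ℂ) * (ζ:ℂ)) := by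
  intro t
  have hα' : (α:ℂ) ≠ 0 := Complex.ofReal_ne_zero.mpr hα
  have hτ' : (τ:ℂ) ≠ 0 := Complex.ofReal_ne_zero.mpr hτ
  have hζ' : (ζ:ℂ) ≠ 0 := Complex.ofReal_ne_zero.mpr hζ
  have e1 : Complex.exp (Complex.I * θ)
      = (Real.cos θ : ℂ) + (Real.sin θ : ℂ) * Complex.I := by
    rw [mul_comm, Complex.exp_mul_I, Complex.ofReal_cos, Complex.ofReal_sin]
  have e2 : Complex.exp (-Complex.I * θ)
      = (Real.cos θ : ℂ) - (Real.sin θ : ℂ) * Complex.I := by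
    rw [show -Complex.I * (θ:ℂ) = (-θ:ℂ) * Complex.I by push_cast; ring,
      Complex.exp_mul_I, Complex.cos_neg, Complex.sin_neg,
      Complex.ofReal_cos, Complex.ofReal_sin]
    ring
  have h1' : (τ:ℂ)^2 * ζ = 2*(Real.cos θ:ℂ) + ζ := by exact_mod_cast congrArg (Complex.ofReal) h1
  have h2' : (α:ℂ) * (τ:ℂ)^2 * (1 + 2*(ζ:ℂ)*(Real.cos θ:ℂ)) = 1 := by
    exact_mod_cast congrArg (Complex.ofReal) h2
  have hc : (Real.sin θ:ℂ)^2 + (Real.cos θ:ℂ)^2 = 1 := by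
    have := Real.sin_sq_add_cos_sq θ
    exact_mod_cast congrArg (Complex.ofReal) this
  rw [e1, e2]
  simp only [Complex.ofReal_cos, Complex.ofReal_sin] at h1' h2' hc ⊢
  field_simp
  linear_combination ((α:ℂ)*(τ:ℂ)*t^2) * h1'
    + t * h2'
    + ((α:ℂ)*(τ:ℂ)^2*t - (α:ℂ)*(τ:ℂ)^3*(ζ:ℂ)) * hc
    + (-(Complex.sin θ)^2*((α:ℂ)*(τ:ℂ)^2*t - (α:ℂ)*(τ:ℂ)^3*(ζ:ℂ))) * Complex.I_sq
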